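/- If A ∈ B(H) satisfies Re(|A||A*|) = O, then w(A) = (1/2)√‖A*A + AA*‖. -/

import Mathlib

open ContinuousLinearMap in
noncomputable def numRad {E : Type*} [NormedAddCommGroup E] [InnerProductSpace ℂ E]
    (T : E →L[ℂ] E) : ℝ :=
  ⨆ x : {x : E // ‖x‖ = 1}, ‖(inner ℂ (T x) (x : E) : ℂ)‖

variable {H : Type*} [NormedAddCommGroup H] [InnerProductSpace ℂ H] [CompleteSpace H]

/-- `|A| = (A*A)^{1/2}`, the positive square root of `A*A`. -/
noncomputable def absOp (A : H →L[ℂ] H) : H →L[ℂ] H :=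
  CFC.sqrt (ContinuousLinearMap.adjoint A * A)

/-- real part of an operator -/
noncomputable def reOp (A : H →L[ℂ] H) : H →L[ℂ] H :=
  (1 / 2 : ℂ) • (A + ContinuousLinearMap.adjoint A)

/-- imaginary part of an operator -/
noncomputable def imOp (A : H →L[ℂ] H) : H →L[ℂ] H :=
  (1 / (2 * Complex.I) : ℂ) • (A - ContinuousLinearMap.adjoint A)

/-- the block diagonal operator `diag(A,B)` on `H ⊕ H` (ℓ²-sum). -/
noncomputable def blockDiag (A B : H →L[ℂ] H) :
    WithLp 2 (H × H) →L[ℂ] WithLp 2 (H × H) :=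
  ((WithLp.prodContinuousLinearEquiv 2 ℂ H H).symm.toContinuousLinearMap).comp
    ((A.prodMap B).comp (WithLp.prodContinuousLinearEquiv 2 ℂ H H).toContinuousLinearMap)

/-- the off-diagonal block operator `[[O,A],[B,O]] : (x,y) ↦ (A y, B x)` on `H ⊕ H`. -/
noncomputable def blockOffDiag (A B : H →L[ℂ] H) :
    WithLp 2 (H × H) →L[ℂ] WithLp 2 (H × H) :=
  ((WithLp.prodContinuousLinearEquiv 2 ℂ H H).symm.toContinuousLinearMap).comp
    (((A.prodMap B).comp (ContinuousLinearEquiv.prodComm ℂ H H).toContinuousLinearMap).comp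
      (WithLp.prodContinuousLinearEquiv 2 ℂ H H).toContinuousLinearMap)

set_option maxHeartbeats 1000000
set_option synthInstance.maxHeartbeats 200000
set_option linter.unusedSectionVars false
set_option linter.unusedVariables false

section aux
open ContinuousLinearMap

local notation "⟪" x ", " y "⟫" => @inner ℂ _ _ x y

lemma inner_unit_le_opNorm (T : H →L[ℂ] H) (x : H) (hx : ‖x‖ = 1) :
    ‖⟪T x, x⟫‖ ≤ ‖T‖ := by
  calc ‖⟪T x, x⟫‖ ≤ ‖T x‖ * ‖x‖ := norm_inner_le_norm _ _
  _ ≤ ‖T‖ * ‖x‖ * ‖x‖ := by gcongr; exact T.le_opNorm x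
  _ = ‖T‖ := by rw [hx]; ring

lemma bddAbove_numRad (T : H →L[ℂ] H) :
    BddAbove (Set.range fun x : {x : H // ‖x‖ = 1} => ‖⟪T x, (x:H)⟫‖) := by
  refine ⟨‖T‖, ?_⟩
  rintro r ⟨x, rfl⟩
  exact inner_unit_le_opNorm T x x.2

lemma numRad_nonneg (T : H →L[ℂ] H) : 0 ≤ numRad T :=
  Real.iSup_nonneg fun x => norm_nonneg _

lemma le_numRad (T : H →L[ℂ] H) (x : H) (hx : ‖x‖ = 1) :
    ‖⟪T x, x⟫‖ ≤ numRad T :=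
  le_ciSup (bddAbove_numRad T) (⟨x, hx⟩ : {x : H // ‖x‖ = 1})

lemma numRad_le (T : H →L[ℂ] H) {c : ℝ} (hc : 0 ≤ c)
    (h : ∀ x : H, ‖x‖ = 1 → ‖⟪T x, x⟫‖ ≤ c) : numRad T ≤ c :=
  Real.iSup_le (fun x => h x x.2) hc

lemma inner_quad_le (T : H →L[ℂ] H) (z : H) :
    ‖⟪T z, z⟫‖ ≤ numRad T * ‖z‖ ^ 2 := by
  rcases eq_or_ne z 0 with rfl | hz
  · simp
  · have hnz : ‖z‖ ≠ 0 := norm_ne_zero_iff.2 hz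
    set u : H := ((‖z‖⁻¹ : ℝ) : ℂ) • z with hu
    have hu1 : ‖u‖ = 1 := by
      rw [hu, norm_smul]
      simp [hnz]
    have key : ⟪T u, u⟫ = ((‖z‖⁻¹ : ℝ) : ℂ)^2 * ⟪T z, z⟫ := by
      rw [hu, map_smul, inner_smul_left, inner_smul_right]
      rw [Complex.conj_ofReal]
      ring
    have h1 : ‖⟪T u, u⟫‖ = (‖z‖⁻¹)^2 * ‖⟪T z, z⟫‖ := by
      rw [key, norm_mul, norm_pow, Complex.norm_real]
      simp [abs_of_nonneg (inv_nonneg.2 (norm_nonneg z))]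
    have h2 := le_numRad T u hu1
    rw [h1] at h2
    have hz2 : (0:ℝ) < ‖z‖ := lt_of_le_of_ne (norm_nonneg z) (Ne.symm hnz)
    calc ‖⟪T z, z⟫‖ = ((‖z‖⁻¹)^2 * ‖⟪T z, z⟫‖) * ‖z‖^2 := by
          field_simp
      _ ≤ numRad T * ‖z‖^2 := by gcongr

lemma isSelfAdjoint_inner_comm {T : H →L[ℂ] H} (hT : IsSelfAdjoint T) (u v : H) :
    ⟪T u, v⟫ = ⟪u, T v⟫ := by
  conv_lhs => rw [← hT.adjoint_eq]
  exact adjoint_inner_left T v u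

lemma polar_re {T : H →L[ℂ] H} (hT : IsSelfAdjoint T) (u v : H) :
    4 * Complex.re ⟪T u, v⟫ =
      Complex.re ⟪T (u+v), u+v⟫ - Complex.re ⟪T (u-v), u-v⟫ := by
  have expand : ⟪T (u+v), u+v⟫ - ⟪T (u-v), u-v⟫ = 2 * (⟪T u, v⟫ + ⟪T v, u⟫) := by
    simp only [map_add, map_sub, inner_add_left, inner_add_right, inner_sub_left,
      inner_sub_right]
    ring
  have hsymm : Complex.re ⟪T v, u⟫ = Complex.re ⟪T u, v⟫ := by
    rw [isSelfAdjoint_inner_comm hT v u, ← inner_conj_symm, Complex.conj_re]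
  have := congrArg Complex.re expand
  simp only [Complex.sub_re, Complex.mul_re, Complex.add_re] at this ⊢
  rw [this]
  simp only [Complex.re_ofNat, Complex.im_ofNat, hsymm]
  ring

lemma norm_le_numRad {T : H →L[ℂ] H} (hT : IsSelfAdjoint T) : ‖T‖ ≤ numRad T := by
  have key : ∀ x : H, ‖x‖ = 1 → ‖T x‖ ≤ numRad T := by
    intro x hx
    rcases eq_or_ne (T x) 0 with h0 | h0
    · rw [h0, norm_zero]; exact numRad_nonneg T
    · have hTx : (0:ℝ) < ‖T x‖ := norm_pos_iff.2 h0
      set y : H := ((‖T x‖⁻¹ : ℝ) : ℂ) • T x with hy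
      have hy1 : ‖y‖ = 1 := by
        rw [hy, norm_smul]
        simp [hTx.ne']
      -- ‖T x‖ = re ⟪T x, y⟫
      have hre : ‖T x‖ = Complex.re ⟪T x, y⟫ := by
        have h1 : (⟪T x, T x⟫).re = ‖T x‖^2 := by
          have := @inner_self_eq_norm_sq ℂ H _ _ _ (T x)
          simpa using this
        have h2 : (⟪T x, T x⟫).im = 0 := by
          exact @inner_self_im ℂ H _ _ _ (T x)
        rw [hy, inner_smul_right, Complex.mul_re, Complex.ofReal_re, Complex.ofReal_im, h1, h2]
        field_simp
        ring
      have habs : ∀ z : H, Complex.re ⟪T z, z⟫ ≤ numRad T * ‖z‖^2 := fun z =>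
        le_trans (Complex.re_le_norm _) (inner_quad_le T z)
      have habs' : ∀ z : H, -(numRad T * ‖z‖^2) ≤ Complex.re ⟪T z, z⟫ := by
        intro z
        have := Complex.abs_re_le_norm ⟪T z, z⟫
        have h2 := inner_quad_le T z
        cases abs_le.1 (le_trans this h2) with
        | intro h _ => exact h
      have hp := polar_re hT x y
      have hpar := parallelogram_law_with_norm ℂ x y
      have : 4 * Complex.re ⟪T x, y⟫ ≤ numRad T * ‖x+y‖^2 + numRad T * ‖x-y‖^2 := by
        rw [hp]
        have := habs (x+y)
        have := habs' (x-y)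
        linarith
      have hfin : 4 * Complex.re ⟪T x, y⟫ ≤ 4 * numRad T := by
        calc 4 * Complex.re ⟪T x, y⟫ ≤ numRad T * ‖x+y‖^2 + numRad T * ‖x-y‖^2 := this
        _ = numRad T * (‖x+y‖*‖x+y‖ + ‖x-y‖*‖x-y‖) := by ring
        _ = numRad T * (2 * (‖x‖*‖x‖ + ‖y‖*‖y‖)) := by linear_combination numRad T * hpar
        _ = 4 * numRad T := by rw [hx, hy1]; ring
      rw [hre]
      linarith
  refine T.opNorm_le_bound (numRad_nonneg T) ?_
  intro z
  rcases eq_or_ne z 0 with rfl | hz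
  · simp
  · have hnz : ‖z‖ ≠ 0 := norm_ne_zero_iff.2 hz
    set u : H := ((‖z‖⁻¹ : ℝ) : ℂ) • z with hu
    have hu1 : ‖u‖ = 1 := by rw [hu, norm_smul]; simp [hnz]
    have hzu : z = ((‖z‖ : ℝ) : ℂ) • u := by
      rw [hu, smul_smul, ← Complex.ofReal_mul]
      rw [mul_inv_cancel₀ hnz]
      simp
    calc ‖T z‖ = ‖((‖z‖ : ℝ) : ℂ) • T u‖ := by rw [← map_smul, ← hzu]
    _ = ‖z‖ * ‖T u‖ := by rw [norm_smul]; simp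
    _ ≤ ‖z‖ * numRad T := by gcongr; exact key u hu1
    _ = numRad T * ‖z‖ := by ring

lemma re_inner_le_of_le {S T : H →L[ℂ] H} (h : S ≤ T) (x : H) :
    Complex.re ⟪S x, x⟫ ≤ Complex.re ⟪T x, x⟫ := by
  have h2 := ((ContinuousLinearMap.le_def S T).1 h).inner_nonneg_left x
  simp only [ContinuousLinearMap.sub_apply, inner_sub_left, RCLike.re_to_complex,
    Complex.sub_re] at h2
  have h3 := (Complex.nonneg_iff.1 h2).1
  simp only [Complex.sub_re] at h3
  linarith

lemma re_inner_nonneg {S : H →L[ℂ] H} (hS : 0 ≤ S) (x : H) :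
    0 ≤ Complex.re ⟪S x, x⟫ :=
  (Complex.nonneg_iff.1 (((ContinuousLinearMap.nonneg_iff_isPositive S).1 hS).inner_nonneg_left x)).1

lemma sqrt_eq_cfc_real {c : H →L[ℂ] H} (hc : 0 ≤ c) :
    CFC.sqrt c = cfc Real.sqrt c := by
  have hsa : IsSelfAdjoint c := .of_nonneg hc
  have h1 : cfc Real.sqrt c * cfc Real.sqrt c = c := by
    rw [← cfc_mul Real.sqrt Real.sqrt c]
    have : Set.EqOn (fun t => Real.sqrt t * Real.sqrt t) id (spectrum ℝ c) := fun t ht =>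
      Real.mul_self_sqrt (spectrum_nonneg_of_nonneg hc ht)
    rw [cfc_congr this, cfc_id ℝ c]
  exact CFC.sqrt_unique h1 (cfc_nonneg fun t _ => Real.sqrt_nonneg t)

section nontrivial
variable [Nontrivial H]

lemma spectrum_subset_Icc {c : H →L[ℂ] H} (hc : 0 ≤ c) :
    spectrum ℝ c ⊆ Set.Icc 0 ‖c‖ := by
  intro t ht
  refine ⟨spectrum_nonneg_of_nonneg hc ht, ?_⟩
  have := spectrum.norm_le_norm_of_mem ht
  rwa [Real.norm_eq_abs, abs_of_nonneg (spectrum_nonneg_of_nonneg hc ht)] at this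

lemma aeval_semiconj (A : H →L[ℂ] H) (q : Polynomial ℝ) :
    Polynomial.aeval (A * star A) q * A = A * Polynomial.aeval (star A * A) q := by
  have base : SemiconjBy A (star A * A) (A * star A) := (mul_assoc A (star A) A).symm
  have key : SemiconjBy A (Polynomial.aeval (star A * A) q) (Polynomial.aeval (A * star A) q) := by
    induction q using Polynomial.induction_on with
    | C r => simpa [Polynomial.aeval_C, SemiconjBy] using (Algebra.commutes r A).symm
    | add p q hp hq => simpa [map_add] using hp.add_right hq
    | monomial n r ih =>
        simp only [map_mul, Polynomial.aeval_C, Polynomial.aeval_X_pow, Polynomial.aeval_X,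
          mul_assoc]
        have hC : SemiconjBy A ((algebraMap ℝ (H →L[ℂ] H)) r) ((algebraMap ℝ (H →L[ℂ] H)) r) :=
          (Algebra.commutes r A).symm
        exact hC.mul_right ((base.pow_right n).mul_right base)
  exact key.symm

lemma cfc_semiconj (A : H →L[ℂ] H) {f : ℝ → ℝ} (hf : Continuous f) :
    cfc f (A * star A) * A = A * cfc f (star A * A) := by
  set c₁ := star A * A with hc₁def
  set c₂ := A * star A with hc₂def
  have hc₁ : (0 : H →L[ℂ] H) ≤ c₁ := star_mul_self_nonneg A
  have hc₂ : (0 : H →L[ℂ] H) ≤ c₂ := mul_star_self_nonneg A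
  have hsa₁ : IsSelfAdjoint c₁ := .of_nonneg hc₁
  have hsa₂ : IsSelfAdjoint c₂ := .of_nonneg hc₂
  set R := max ‖c₁‖ ‖c₂‖ with hR
  have hR0 : (0:ℝ) ≤ R := le_trans (norm_nonneg c₁) (le_max_left _ _)
  have hspec₁ : spectrum ℝ c₁ ⊆ Set.Icc 0 R :=
    (spectrum_subset_Icc hc₁).trans (Set.Icc_subset_Icc le_rfl (le_max_left _ _))
  have hspec₂ : spectrum ℝ c₂ ⊆ Set.Icc 0 R :=
    (spectrum_subset_Icc hc₂).trans (Set.Icc_subset_Icc le_rfl (le_max_right _ _))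
  rw [← sub_eq_zero, ← norm_le_zero_iff]
  refine le_of_forall_pos_le_add ?_
  intro ε hε
  have hden : (0:ℝ) < 2 * ‖A‖ + 1 := by positivity
  set δ := ε / (2 * ‖A‖ + 1) with hδdef
  have hδ : 0 < δ := div_pos hε hden
  obtain ⟨p, hp⟩ := exists_polynomial_near_of_continuousOn 0 R f hf.continuousOn δ hδ
  have key : ∀ c : H →L[ℂ] H, 0 ≤ c → spectrum ℝ c ⊆ Set.Icc 0 R →
      ‖cfc f c - Polynomial.aeval c p‖ ≤ δ := by
    intro c hc hspec
    have hsa : IsSelfAdjoint c := .of_nonneg hc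
    rw [← cfc_polynomial p c, ← cfc_sub _ _ c]
    apply norm_cfc_le hδ.le
    intro t ht
    have := hp t (hspec ht)
    rw [Real.norm_eq_abs, abs_sub_comm]
    linarith [abs_nonneg (f t - Polynomial.eval t p)]
  have e₁ := key c₁ hc₁ hspec₁
  have e₂ := key c₂ hc₂ hspec₂
  have hid : cfc f c₂ * A - A * cfc f c₁
      = (cfc f c₂ - Polynomial.aeval c₂ p) * A + A * (Polynomial.aeval c₁ p - cfc f c₁) := by
    rw [sub_mul, mul_sub, aeval_semiconj A p]
    abel
  calc ‖cfc f c₂ * A - A * cfc f c₁‖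
      ≤ ‖(cfc f c₂ - Polynomial.aeval c₂ p) * A‖ + ‖A * (Polynomial.aeval c₁ p - cfc f c₁)‖ := by
        rw [hid]; exact norm_add_le _ _
    _ ≤ δ * ‖A‖ + ‖A‖ * δ := by
        gcongr
        · exact le_trans (norm_mul_le _ _) (by gcongr)
        · refine le_trans (norm_mul_le _ _) ?_
          have : ‖Polynomial.aeval c₁ p - cfc f c₁‖ ≤ δ := by rwa [norm_sub_rev]
          gcongr
    _ = (2 * ‖A‖) * δ := by ring
    _ ≤ (2 * ‖A‖ + 1) * δ := by nlinarith [hδ.le]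
    _ = ε := by rw [hδdef]; field_simp
    _ ≤ 0 + ε := by linarith

lemma mixed_schwarz_eps (A : H →L[ℂ] H) (x : H) (hx : ‖x‖ = 1) {ε : ℝ} (hε : 0 < ε) :
    ‖⟪A x, x⟫‖^2 ≤ Complex.re ⟪cfc Real.sqrt (star A * A) x, x⟫ *
      (Complex.re ⟪cfc Real.sqrt (A * star A) x, x⟫ + ε) := by
  set c₁ := star A * A with hc₁def
  set c₂ := A * star A with hc₂def
  have hc₁ : (0 : H →L[ℂ] H) ≤ c₁ := star_mul_self_nonneg A
  have hc₂ : (0 : H →L[ℂ] H) ≤ c₂ := mul_star_self_nonneg A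
  have hsa₁ : IsSelfAdjoint c₁ := .of_nonneg hc₁
  have hsa₂ : IsSelfAdjoint c₂ := .of_nonneg hc₂
  set f : ℝ → ℝ := fun u => Real.sqrt (Real.sqrt (max u 0) + ε) with hfdef
  set g : ℝ → ℝ := fun u => (Real.sqrt (Real.sqrt (max u 0) + ε))⁻¹ with hgdef
  have hpos : ∀ u : ℝ, 0 < Real.sqrt (max u 0) + ε := fun u =>
    add_pos_of_nonneg_of_pos (Real.sqrt_nonneg _) hε
  have hfpos : ∀ u, 0 < f u := fun u => Real.sqrt_pos.2 (hpos u)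
  have hfc : Continuous f := Real.continuous_sqrt.comp
    ((Real.continuous_sqrt.comp (continuous_id.max continuous_const)).add continuous_const)
  have hgc : Continuous g := hfc.inv₀ fun u => (hfpos u).ne'
  have hfg : ∀ u, f u * g u = 1 := fun u => mul_inv_cancel₀ (hfpos u).ne'
  set r := cfc f c₂ with hrdef
  set s := cfc g c₂ with hsdef
  have hr_sa : IsSelfAdjoint r := cfc_predicate f c₂
  have hs_sa : IsSelfAdjoint s := cfc_predicate g c₂
  have hsr : s * r = 1 := by
    rw [hsdef, hrdef, ← cfc_mul g f c₂ hgc.continuousOn hfc.continuousOn]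
    have hone : (fun u => g u * f u) = 1 := funext fun u => by
      simp only [Pi.one_apply, mul_comm (g u) (f u)]; exact hfg u
    rw [hone, cfc_one ℝ c₂]
  set m := cfc (fun u => g u * g u) c₁ with hmdef
  have hm_sa : IsSelfAdjoint m := cfc_predicate _ c₁
  have hssA : s * s * A = A * m := by
    rw [hsdef, hmdef, ← cfc_mul g g c₂ hgc.continuousOn hgc.continuousOn]
    exact cfc_semiconj A (hgc.mul hgc)
  have key : ⟪A x, x⟫ = ⟪s (A x), r x⟫ := by
    rw [isSelfAdjoint_inner_comm hs_sa, ← ContinuousLinearMap.mul_apply s r x, hsr,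
      ContinuousLinearMap.one_apply]
  have cs : ‖⟪A x, x⟫‖ ≤ ‖s (A x)‖ * ‖r x‖ := key ▸ norm_inner_le_norm _ _
  set P := cfc (fun u => g u * g u * u) c₁ with hPdef
  have hid : cfc (id : ℝ → ℝ) c₁ = c₁ := cfc_id ℝ c₁
  have hP : P = m * c₁ := by
    have h := cfc_mul (fun u => g u * g u) _root_.id c₁
      ((hgc.mul hgc).continuousOn) continuous_id.continuousOn
    simp only [id_eq] at h
    rw [hid] at h
    exact h
  have e1 : ‖s (A x)‖^2 = Complex.re ⟪P x, x⟫ := by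
    have h1 : (‖s (A x)‖:ℝ)^2 = Complex.re ⟪s (A x), s (A x)⟫ := by
      have := @inner_self_eq_norm_sq ℂ H _ _ _ (s (A x)); simpa using this.symm
    rw [h1]
    congr 1
    have hadj : ContinuousLinearMap.adjoint A (A x) = c₁ x := by
      rw [hc₁def, ContinuousLinearMap.star_eq_adjoint]; rfl
    calc ⟪s (A x), s (A x)⟫ = ⟪A x, (s * s * A) x⟫ := by
          rw [isSelfAdjoint_inner_comm hs_sa]; rfl
    _ = ⟪A x, A (m x)⟫ := by rw [hssA]; rfl
    _ = ⟪ContinuousLinearMap.adjoint A (A x), m x⟫ :=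
          (ContinuousLinearMap.adjoint_inner_left A (m x) (A x)).symm
    _ = ⟪c₁ x, m x⟫ := by rw [hadj]
    _ = ⟪m (c₁ x), x⟫ := (isSelfAdjoint_inner_comm hm_sa (c₁ x) x).symm
    _ = ⟪P x, x⟫ := by rw [hP]; rfl
  have hPa : P ≤ cfc Real.sqrt c₁ := by
    rw [hPdef]
    refine cfc_mono ?_ (((hgc.mul hgc).mul continuous_id).continuousOn)
      Real.continuous_sqrt.continuousOn
    intro u hu
    have hu0 : (0:ℝ) ≤ u := spectrum_nonneg_of_nonneg hc₁ hu
    have hmax : max u 0 = u := max_eq_left hu0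
    have hgg : g u * g u = (Real.sqrt u + ε)⁻¹ := by
      simp only [hgdef, hmax, ← mul_inv]
      rw [Real.mul_self_sqrt (by positivity)]
    rw [hgg]
    have hpos' : (0:ℝ) < Real.sqrt u + ε := add_pos_of_nonneg_of_pos (Real.sqrt_nonneg u) hε
    rw [inv_mul_le_iff₀ hpos']
    nlinarith [Real.mul_self_sqrt hu0, Real.sqrt_nonneg u, hε.le]
  have est1 : ‖s (A x)‖^2 ≤ Complex.re ⟪cfc Real.sqrt c₁ x, x⟫ :=
    e1 ▸ re_inner_le_of_le hPa x
  have e2 : ‖r x‖^2 = Complex.re ⟪cfc Real.sqrt c₂ x, x⟫ + ε := by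
    have h1 : (‖r x‖:ℝ)^2 = Complex.re ⟪r (r x), x⟫ := by
      rw [isSelfAdjoint_inner_comm hr_sa]
      have := @inner_self_eq_norm_sq ℂ H _ _ _ (r x); simpa using this.symm
    have hrr : r * r = cfc Real.sqrt c₂ + algebraMap ℝ (H →L[ℂ] H) ε := by
      rw [hrdef, ← cfc_mul f f c₂ hfc.continuousOn hfc.continuousOn]
      have hcong : Set.EqOn (fun u => f u * f u) (fun u => Real.sqrt u + ε) (spectrum ℝ c₂) := by
        intro u hu
        have hu0 : (0:ℝ) ≤ u := spectrum_nonneg_of_nonneg hc₂ hu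
        simp only [hfdef, max_eq_left hu0]
        exact Real.mul_self_sqrt (add_pos_of_nonneg_of_pos (Real.sqrt_nonneg u) hε).le
      rw [cfc_congr hcong]
      rw [cfc_add c₂ Real.sqrt (fun _ => ε) Real.continuous_sqrt.continuousOn
        continuousOn_const]
      rw [cfc_const ε c₂]
    rw [h1, ← ContinuousLinearMap.mul_apply, hrr]
    rw [ContinuousLinearMap.add_apply, inner_add_left, Complex.add_re]
    congr 1
    have halg : (algebraMap ℝ (H →L[ℂ] H) ε) x = (ε:ℂ) • x := by
      rw [Algebra.algebraMap_eq_smul_one]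
      simp [ContinuousLinearMap.smul_apply]
    rw [halg, inner_smul_left]
    have : (starRingEnd ℂ) (ε:ℂ) = (ε:ℂ) := Complex.conj_ofReal ε
    rw [this]
    have h2 : Complex.re ⟪x, x⟫ = 1 := by
      have := @inner_self_eq_norm_sq ℂ H _ _ _ x
      simp only [RCLike.re_to_complex] at this
      rw [this, hx]; norm_num
    rw [Complex.mul_re, Complex.ofReal_re, Complex.ofReal_im, h2]
    have h3 : Complex.im ⟪x, x⟫ = 0 := @inner_self_im ℂ H _ _ _ x
    rw [h3]
    ring
  have hα : 0 ≤ Complex.re ⟪cfc Real.sqrt c₁ x, x⟫ :=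
    re_inner_nonneg (cfc_nonneg fun t _ => Real.sqrt_nonneg t) x
  calc ‖⟪A x, x⟫‖^2 ≤ (‖s (A x)‖ * ‖r x‖)^2 := by
        have h0 : (0:ℝ) ≤ ‖⟪A x, x⟫‖ := norm_nonneg _
        nlinarith [cs]
  _ = ‖s (A x)‖^2 * ‖r x‖^2 := by ring
  _ ≤ Complex.re ⟪cfc Real.sqrt c₁ x, x⟫ * (Complex.re ⟪cfc Real.sqrt c₂ x, x⟫ + ε) := by
        rw [← e2]
        exact mul_le_mul_of_nonneg_right est1 (sq_nonneg _)

lemma mixed_schwarz (A : H →L[ℂ] H) (x : H) (hx : ‖x‖ = 1) :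
    ‖⟪A x, x⟫‖^2 ≤ Complex.re ⟪cfc Real.sqrt (star A * A) x, x⟫ *
      Complex.re ⟪cfc Real.sqrt (A * star A) x, x⟫ := by
  set α := Complex.re ⟪cfc Real.sqrt (star A * A) x, x⟫ with hα'
  set β := Complex.re ⟪cfc Real.sqrt (A * star A) x, x⟫ with hβ'
  have hα : 0 ≤ α := re_inner_nonneg (cfc_nonneg fun t _ => Real.sqrt_nonneg t) x
  refine le_of_forall_pos_le_add ?_
  intro δ hδ
  have hε : 0 < δ / (α + 1) := by positivity
  have hms := mixed_schwarz_eps A x hx hε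
  have h1 : α / (α + 1) ≤ 1 := by
    rw [div_le_one (by positivity)]; linarith
  calc ‖⟪A x, x⟫‖^2 ≤ α * (β + δ/(α+1)) := hms
  _ = α*β + (α/(α+1))*δ := by ring
  _ ≤ α*β + 1*δ := by
      have := mul_le_mul_of_nonneg_right h1 hδ.le
      linarith
  _ = α*β + δ := by ring

lemma numRad_le_half_norm (A : H →L[ℂ] H) :
    numRad A ≤ (1/2) * ‖CFC.sqrt (star A * A) + CFC.sqrt (A * star A)‖ := by
  set a := CFC.sqrt (star A * A) with hadef
  set b := CFC.sqrt (A * star A) with hbdef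
  have hnn : (0:ℝ) ≤ 1/2 * ‖a + b‖ := by positivity
  refine numRad_le A hnn ?_
  intro x hx
  have hms := mixed_schwarz A x hx
  rw [← sqrt_eq_cfc_real (star_mul_self_nonneg A),
    ← sqrt_eq_cfc_real (mul_star_self_nonneg A)] at hms
  have hα : 0 ≤ Complex.re ⟪a x, x⟫ := re_inner_nonneg (CFC.sqrt_nonneg _) x
  have hβ : 0 ≤ Complex.re ⟪b x, x⟫ := re_inner_nonneg (CFC.sqrt_nonneg _) x
  have hsum : Complex.re ⟪a x, x⟫ + Complex.re ⟪b x, x⟫ ≤ ‖a + b‖ := by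
    have h1 : Complex.re ⟪a x, x⟫ + Complex.re ⟪b x, x⟫ = Complex.re ⟪(a+b) x, x⟫ := by
      rw [ContinuousLinearMap.add_apply, inner_add_left, Complex.add_re]
    rw [h1]
    refine (Complex.re_le_norm _).trans ?_
    exact inner_unit_le_opNorm (a+b) x hx
  have hsq : ‖⟪A x, x⟫‖^2 ≤ (1/2 * ‖a+b‖)^2 := by
    calc ‖⟪A x, x⟫‖^2 ≤ Complex.re ⟪a x, x⟫ * Complex.re ⟪b x, x⟫ := hms
    _ ≤ (1/2 * ‖a+b‖)^2 := by nlinarith [sq_nonneg (Complex.re ⟪a x, x⟫ - Complex.re ⟪b x, x⟫)]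
  nlinarith [norm_nonneg (⟪A x, x⟫ : ℂ), hnn]

lemma sq_norm_sqrt_add_sqrt (A : H →L[ℂ] H)
    (hab : CFC.sqrt (star A * A) * CFC.sqrt (A * star A)
         + CFC.sqrt (A * star A) * CFC.sqrt (star A * A) = 0) :
    ‖CFC.sqrt (star A * A) + CFC.sqrt (A * star A)‖^2 = ‖star A * A + A * star A‖ := by
  set a := CFC.sqrt (star A * A) with hadef
  set b := CFC.sqrt (A * star A) with hbdef
  have haa : a * a = star A * A := CFC.sqrt_mul_sqrt_self _ (star_mul_self_nonneg A)
  have hbb : b * b = A * star A := CFC.sqrt_mul_sqrt_self _ (mul_star_self_nonneg A)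
  have hsa : IsSelfAdjoint (a + b) :=
    (IsSelfAdjoint.of_nonneg (CFC.sqrt_nonneg _)).add (IsSelfAdjoint.of_nonneg (CFC.sqrt_nonneg _))
  have hexp : (a+b)*(a+b) = star A * A + A * star A := by
    have hh : (a+b)*(a+b) = a*a + b*b + (a*b + b*a) := by noncomm_ring
    rw [hh, hab, add_zero, haa, hbb]
  have h1 : ‖star (a+b) * (a+b)‖ = ‖a+b‖*‖a+b‖ := CStarRing.norm_star_mul_self
  rw [hsa.star_eq, hexp] at h1
  rw [h1]; ring

lemma sum_sq_norm_le_numRad (A : H →L[ℂ] H) :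
    ‖star A * A + A * star A‖ ≤ 4 * numRad A ^ 2 := by
  set B := ContinuousLinearMap.adjoint A with hBdef
  have hstarB : star A = B := ContinuousLinearMap.star_eq_adjoint A
  have hstarB' : star B = A := by
    rw [hBdef, ContinuousLinearMap.star_eq_adjoint, ContinuousLinearMap.adjoint_adjoint]
  set Rp := reOp A with hRpdef
  set Ip := imOp A with hIpdef
  have hRpeq : Rp = (1/2 : ℂ) • (A + B) := by rw [hRpdef, reOp, hBdef]
  have hIpeq : Ip = (1/(2*Complex.I) : ℂ) • (A - B) := by rw [hIpdef, imOp, hBdef]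
  have hRp_sa : IsSelfAdjoint Rp := by
    rw [hRpeq]
    show star _ = _
    rw [star_smul, star_add, hstarB, hstarB']
    have hc : star (1/2 : ℂ) = 1/2 := by simp
    rw [hc, add_comm B A]
  have hIp_sa : IsSelfAdjoint Ip := by
    rw [hIpeq]
    show star _ = _
    rw [star_smul, star_sub, hstarB, hstarB']
    have hc : star (1/(2*Complex.I) : ℂ) = -(1/(2*Complex.I)) := by
      simp [Complex.ext_iff]
    rw [hc, ← neg_sub A B, neg_smul, smul_neg, neg_neg]
  -- the decomposition
  have hI2 : (1/(2*Complex.I) : ℂ) * (1/(2*Complex.I)) = -(1/4) := by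
    have h4 : (2*Complex.I) * (2*Complex.I) = -4 := by
      rw [mul_mul_mul_comm]
      norm_num [Complex.I_mul_I]
    rw [div_mul_div_comm, h4]
    norm_num
  have hsum : star A * A + A * star A = (2:ℂ) • (Rp*Rp + Ip*Ip) := by
    rw [hRpeq, hIpeq, smul_mul_smul_comm, smul_mul_smul_comm, hI2]
    have h12 : (1/2 : ℂ) * (1/2) = 1/4 := by norm_num
    rw [h12, neg_smul, ← sub_eq_add_neg, ← smul_sub]
    have hXY : (A+B)*(A+B) - (A-B)*(A-B) = (B*A + A*B) + (B*A + A*B) := by noncomm_ring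
    rw [hXY, ← two_smul ℂ (B*A + A*B), smul_smul, smul_smul]
    norm_num
    rw [hstarB]
  set S := Rp*Rp + Ip*Ip with hSdef
  have hS_sa : IsSelfAdjoint S := by
    refine IsSelfAdjoint.add ?_ ?_ <;>
      · show star _ = _
        rw [star_mul]
        first
        | rw [hRp_sa.star_eq]
        | rw [hIp_sa.star_eq]
  -- numerical radius bounds for Rp and Ip
  have hinner : ∀ (c : ℂ) (T : H →L[ℂ] H) (y : H),
      ⟪(c • T) y, y⟫ = (starRingEnd ℂ) c * ⟪T y, y⟫ := by
    intro c T y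
    rw [ContinuousLinearMap.smul_apply, inner_smul_left]
  have hRp_rad : ∀ y : H, ‖y‖ = 1 → ‖⟪Rp y, y⟫‖ ≤ numRad A := by
    intro y hy
    have h0 : ⟪Rp y, y⟫ = (starRingEnd ℂ) (1/2 : ℂ) * (⟪A y, y⟫ + ⟪B y, y⟫) := by
      rw [hRpeq, hinner, ContinuousLinearMap.add_apply, inner_add_left]
    have hBy : ⟪B y, y⟫ = (starRingEnd ℂ) ⟪A y, y⟫ := by
      rw [hBdef, ContinuousLinearMap.adjoint_inner_left A y y]
      exact (inner_conj_symm y (A y)).symm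
    rw [h0, hBy, norm_mul, RCLike.norm_conj]
    have hn : ‖(1/2 : ℂ)‖ = 1/2 := by norm_num
    rw [hn]
    have hadd := norm_add_le (⟪A y, y⟫ : ℂ) ((starRingEnd ℂ) ⟪A y, y⟫)
    rw [RCLike.norm_conj] at hadd
    have hle := le_numRad A y hy
    linarith [hadd, hle]
  have hIp_rad : ∀ y : H, ‖y‖ = 1 → ‖⟪Ip y, y⟫‖ ≤ numRad A := by
    intro y hy
    have h0 : ⟪Ip y, y⟫ = (starRingEnd ℂ) (1/(2*Complex.I) : ℂ) * (⟪A y, y⟫ - ⟪B y, y⟫) := by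
      rw [hIpeq, hinner, ContinuousLinearMap.sub_apply, inner_sub_left]
    have hBy : ⟪B y, y⟫ = (starRingEnd ℂ) ⟪A y, y⟫ := by
      rw [hBdef, ContinuousLinearMap.adjoint_inner_left A y y]
      exact (inner_conj_symm y (A y)).symm
    rw [h0, hBy, norm_mul, RCLike.norm_conj]
    have hn : ‖(1/(2*Complex.I) : ℂ)‖ = 1/2 := by
      rw [norm_div, norm_mul]
      simp [Complex.norm_I]
    rw [hn]
    have hadd := norm_sub_le (⟪A y, y⟫ : ℂ) ((starRingEnd ℂ) ⟪A y, y⟫)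
    rw [RCLike.norm_conj] at hadd
    have hle := le_numRad A y hy
    linarith [hadd, hle]
  have hRp_norm : ‖Rp‖ ≤ numRad A :=
    (norm_le_numRad hRp_sa).trans (numRad_le Rp (numRad_nonneg A) hRp_rad)
  have hIp_norm : ‖Ip‖ ≤ numRad A :=
    (norm_le_numRad hIp_sa).trans (numRad_le Ip (numRad_nonneg A) hIp_rad)
  -- bound ‖S‖
  have hS_rad : ∀ y : H, ‖y‖ = 1 → ‖⟪S y, y⟫‖ ≤ 2 * numRad A ^ 2 := by
    intro y hy
    have h0 : ⟪S y, y⟫ = ⟪Rp y, Rp y⟫ + ⟪Ip y, Ip y⟫ := by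
      rw [hSdef, ContinuousLinearMap.add_apply, inner_add_left,
        ContinuousLinearMap.mul_apply, ContinuousLinearMap.mul_apply,
        isSelfAdjoint_inner_comm hRp_sa (Rp y) y, isSelfAdjoint_inner_comm hIp_sa (Ip y) y]
    calc ‖⟪S y, y⟫‖ ≤ ‖(⟪Rp y, Rp y⟫ : ℂ)‖ + ‖(⟪Ip y, Ip y⟫ : ℂ)‖ := h0 ▸ norm_add_le _ _
    _ ≤ ‖Rp y‖*‖Rp y‖ + ‖Ip y‖*‖Ip y‖ :=
        add_le_add (norm_inner_le_norm _ _) (norm_inner_le_norm _ _)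
    _ ≤ numRad A^2 + numRad A^2 := by
        have h1 : ‖Rp y‖ ≤ numRad A := by
          have := Rp.le_opNorm y
          rw [hy, mul_one] at this
          exact this.trans hRp_norm
        have h2 : ‖Ip y‖ ≤ numRad A := by
          have := Ip.le_opNorm y
          rw [hy, mul_one] at this
          exact this.trans hIp_norm
        nlinarith [norm_nonneg (Rp y), norm_nonneg (Ip y)]
    _ = 2 * numRad A ^ 2 := by ring
  have hS_norm : ‖S‖ ≤ 2 * numRad A^2 :=
    (norm_le_numRad hS_sa).trans (numRad_le S (by positivity) hS_rad)
  calc ‖star A * A + A * star A‖ = ‖(2:ℂ) • S‖ := by rw [hsum]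
  _ = 2 * ‖S‖ := by rw [norm_smul]; norm_num
  _ ≤ 4 * numRad A^2 := by linarith

end nontrivial
end aux

theorem numRad_eq_of_re_abs_mul_eq_zero (A : H →L[ℂ] H)
    (h : reOp (absOp A * absOp (ContinuousLinearMap.adjoint A)) = 0) :
    numRad A = (1 / 2) * Real.sqrt
      ‖ContinuousLinearMap.adjoint A * A + A * ContinuousLinearMap.adjoint A‖ := by
  rcases subsingleton_or_nontrivial H with hH | hH
  · have h0 : numRad A = 0 := le_antisymm
      (numRad_le A le_rfl fun x hx => by
        have hx0 : x = (0:H) := Subsingleton.elim x 0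
        rw [hx0, norm_zero] at hx
        norm_num at hx)
      (numRad_nonneg A)
    have hop : ContinuousLinearMap.adjoint A * A + A * ContinuousLinearMap.adjoint A = 0 :=
      ContinuousLinearMap.ext fun x => Subsingleton.elim _ _
    rw [h0, hop, norm_zero, Real.sqrt_zero, mul_zero]
  · have hstar : star A = ContinuousLinearMap.adjoint A := ContinuousLinearMap.star_eq_adjoint A
    rw [← hstar]
    have hab : CFC.sqrt (star A * A) * CFC.sqrt (A * star A)
         + CFC.sqrt (A * star A) * CFC.sqrt (star A * A) = 0 := by
      have h' := h
      simp only [reOp, absOp, ContinuousLinearMap.adjoint_adjoint] at h'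
      rw [← hstar] at h'
      rw [← ContinuousLinearMap.star_eq_adjoint, star_mul,
        (IsSelfAdjoint.of_nonneg (CFC.sqrt_nonneg (star A * A))).star_eq,
        (IsSelfAdjoint.of_nonneg (CFC.sqrt_nonneg (A * star A))).star_eq] at h'
      rw [smul_eq_zero] at h'
      rcases h' with h' | h'
      · norm_num at h'
      · exact h'
    have up := numRad_le_half_norm A
    have hsq := sq_norm_sqrt_add_sqrt A hab
    have h3 : ‖CFC.sqrt (star A * A) + CFC.sqrt (A * star A)‖
        = Real.sqrt ‖star A * A + A * star A‖ := by
      rw [← hsq, Real.sqrt_sq (norm_nonneg _)]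
    rw [h3] at up
    have low := sum_sq_norm_le_numRad A
    have h4 : Real.sqrt ‖star A * A + A * star A‖ ≤ 2 * numRad A := by
      have hmono := Real.sqrt_le_sqrt low
      rwa [show (4:ℝ) * numRad A ^ 2 = (2 * numRad A)^2 by ring,
        Real.sqrt_sq (by nlinarith [numRad_nonneg A])] at hmono
    linarith [up, h4]
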